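/- Let A = {−1,1} and let r > 4 be even, and set m = ⌊(3r−4)/4⌋. Define ℓ(r) = binom(r, (r−2)/2) if r ≡ 2 (mod 4) and ℓ(r) = binom(r, r/2)/2 if r ≡ 0 (mod 4). Then η_A(C_3^r) ≥ Σ binom(r, j) + ℓ(r) + 1, where the sum is over odd j with 1 ≤ j ≤ m. -/

import Mathlib

set_option linter.unreachableTactic false
set_option linter.unusedTactic false
set_option linter.unusedSectionVars false

/-- A multiset `S` over an additive abelian group `G` has an `A`-zero-sum subsequence
of length `k`, for the weight set `A = {-1, 1}`: there is a sub-multiset of `S` of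
cardinality `k` that splits as `t₁ + t₂` with `t₁.sum - t₂.sum = 0` (the elements of
`t₁` receive the weight `+1` and those of `t₂` the weight `-1`). -/
def HasWZSS {G : Type*} [AddCommGroup G] (S : Multiset G) (k : ℕ) : Prop :=
  ∃ t₁ t₂ : Multiset G, t₁ + t₂ ≤ S ∧ Multiset.card (t₁ + t₂) = k ∧ t₁.sum = t₂.sum

/-- `sA G` is the smallest `ℓ` such that every sequence over `G` of length at least `ℓ`
has an `{-1,1}`-zero-sum subsequence of length `exp G`. -/
noncomputable def sA (G : Type*) [AddCommGroup G] : ℕ :=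
  sInf {ℓ : ℕ | ∀ S : Multiset G, ℓ ≤ Multiset.card S →
    HasWZSS S (AddMonoid.exponent G)}

/-- `etaA G` is the smallest `ℓ` such that every sequence over `G` of length at least `ℓ`
has a nonempty `{-1,1}`-zero-sum subsequence of length at most `exp G`. -/
noncomputable def etaA (G : Type*) [AddCommGroup G] : ℕ :=
  sInf {ℓ : ℕ | ∀ S : Multiset G, ℓ ≤ Multiset.card S →
    ∃ k, 1 ≤ k ∧ k ≤ AddMonoid.exponent G ∧ HasWZSS S k}

/-- `gA G` is the smallest `ℓ` such that every sequence over `G` of length at least `ℓ`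
consisting of pairwise distinct elements has an `{-1,1}`-zero-sum subsequence of
length `exp G`. -/
noncomputable def gA (G : Type*) [AddCommGroup G] : ℕ :=
  sInf {ℓ : ℕ | ∀ S : Multiset G, ℓ ≤ Multiset.card S → S.Nodup →
    HasWZSS S (AddMonoid.exponent G)}

namespace EtaAux

open Finset

variable {r : ℕ}

/-- 0/1 indicator vector of `J` in `(ZMod 3)^r`. -/
def sv (J : Finset (Fin r)) : Fin r → ZMod 3 := fun i => if i ∈ J then 1 else 0

/-- ±1 vector: `-1` on `J`, `1` off `J`. -/
def bv (J : Finset (Fin r)) : Fin r → ZMod 3 := fun i => if i ∈ J then -1 else 1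

lemma sv_inj : Function.Injective (sv (r := r)) := by
  intro J K h
  ext i
  have hi := congrFun h i
  by_cases h1 : i ∈ J <;> by_cases h2 : i ∈ K <;>
    simp only [sv, h1, h2, if_true, if_false] at hi ⊢ <;>
    first | trivial | exact absurd hi (by decide)

lemma bv_inj : Function.Injective (bv (r := r)) := by
  intro J K h
  ext i
  have hi := congrFun h i
  by_cases h1 : i ∈ J <;> by_cases h2 : i ∈ K <;>
    simp only [bv, h1, h2, if_true, if_false] at hi ⊢ <;>
    first | trivial | exact absurd hi (by decide)

lemma sv_ne_bv {J K : Finset (Fin r)} (hK : K.Nonempty) : sv J ≠ bv K := by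
  intro h
  obtain ⟨i, hi⟩ := hK
  have h2 := congrFun h i
  by_cases h1 : i ∈ J <;>
    simp only [sv, bv, h1, hi, if_true, if_false] at h2 <;> exact absurd h2 (by decide)

section cores
variable {J K L : Finset (Fin r)}

lemma c_sss (h : sv J + sv K + sv L = 0) : J = K := by
  ext i
  have hi := congrFun h i
  by_cases h1 : i ∈ J <;> by_cases h2 : i ∈ K <;> by_cases h3 : i ∈ L <;>
    simp only [sv, Pi.add_apply, Pi.zero_apply, h1, h2, h3, if_true, if_false] at hi ⊢ <;>
    first | trivial | exact absurd hi (by decide)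

lemma c_bbb (h : bv J + bv K + bv L = 0) : J = K := by
  ext i
  have hi := congrFun h i
  by_cases h1 : i ∈ J <;> by_cases h2 : i ∈ K <;> by_cases h3 : i ∈ L <;>
    simp only [bv, Pi.add_apply, Pi.zero_apply, h1, h2, h3, if_true, if_false] at hi ⊢ <;>
    first | trivial | exact absurd hi (by decide)

lemma c_ssb (h : sv J + sv K + bv L = 0) : J ∪ K = univ ∧ Lᶜ = J ∩ K := by
  have hp : ∀ i : Fin r, (i ∈ J ∨ i ∈ K) ∧ (¬ i ∈ L ↔ (i ∈ J ∧ i ∈ K)) := by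
    intro i
    have hi := congrFun h i
    by_cases h1 : i ∈ J <;> by_cases h2 : i ∈ K <;> by_cases h3 : i ∈ L <;>
      simp only [sv, bv, Pi.add_apply, Pi.zero_apply, h1, h2, h3, if_true, if_false,
        not_true, not_false_iff] at hi ⊢ <;>
      first | trivial | tauto | exact absurd hi (by decide)
  constructor
  · apply eq_univ_of_forall; intro i; rw [mem_union]; exact (hp i).1
  · ext i; rw [mem_compl, mem_inter]; exact (hp i).2

lemma c_sbb (h : sv J + bv K + bv L = 0) : (K ∪ L) \ (K ∩ L) = Jᶜ := by
  ext i
  have hi := congrFun h i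
  rw [mem_sdiff, mem_union, mem_inter, mem_compl]
  by_cases h1 : i ∈ J <;> by_cases h2 : i ∈ K <;> by_cases h3 : i ∈ L <;>
    simp only [sv, bv, Pi.add_apply, Pi.zero_apply, h1, h2, h3, if_true, if_false,
      not_true, not_false_iff] at hi ⊢ <;>
    first | trivial | tauto | exact absurd hi (by decide)

lemma c_ss_s (h : sv J + sv K = sv L) : J ∩ K = ∅ ∧ L = J ∪ K := by
  have hp : ∀ i : Fin r, (¬ (i ∈ J ∧ i ∈ K)) ∧ (i ∈ L ↔ (i ∈ J ∨ i ∈ K)) := by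
    intro i
    have hi := congrFun h i
    by_cases h1 : i ∈ J <;> by_cases h2 : i ∈ K <;> by_cases h3 : i ∈ L <;>
      simp only [sv, Pi.add_apply, h1, h2, h3, if_true, if_false,
        not_true, not_false_iff] at hi ⊢ <;>
      first | trivial | tauto | exact absurd hi (by decide)
  constructor
  · rw [eq_empty_iff_forall_notMem]; intro i hi; rw [mem_inter] at hi; exact (hp i).1 hi
  · ext i; rw [mem_union]; exact (hp i).2

lemma c_ss_b (h : sv J + sv K = bv L) : J ∪ K = univ ∧ L = J ∩ K := by
  have hp : ∀ i : Fin r, (i ∈ J ∨ i ∈ K) ∧ (i ∈ L ↔ (i ∈ J ∧ i ∈ K)) := by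
    intro i
    have hi := congrFun h i
    by_cases h1 : i ∈ J <;> by_cases h2 : i ∈ K <;> by_cases h3 : i ∈ L <;>
      simp only [sv, bv, Pi.add_apply, h1, h2, h3, if_true, if_false,
        not_true, not_false_iff] at hi ⊢ <;>
      first | trivial | tauto | exact absurd hi (by decide)
  constructor
  · apply eq_univ_of_forall; intro i; rw [mem_union]; exact (hp i).1
  · ext i; rw [mem_inter]; exact (hp i).2

lemma c_sb_s (h : sv J + bv K = sv L) : J = K := by
  ext i
  have hi := congrFun h i
  by_cases h1 : i ∈ J <;> by_cases h2 : i ∈ K <;> by_cases h3 : i ∈ L <;>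
    simp only [sv, bv, Pi.add_apply, h1, h2, h3, if_true, if_false] at hi ⊢ <;>
    first | trivial | exact absurd hi (by decide)

lemma c_sb_b (h : sv J + bv K = bv L) : J ∩ K = ∅ ∧ L = J ∪ K := by
  have hp : ∀ i : Fin r, (¬ (i ∈ J ∧ i ∈ K)) ∧ (i ∈ L ↔ (i ∈ J ∨ i ∈ K)) := by
    intro i
    have hi := congrFun h i
    by_cases h1 : i ∈ J <;> by_cases h2 : i ∈ K <;> by_cases h3 : i ∈ L <;>
      simp only [sv, bv, Pi.add_apply, h1, h2, h3, if_true, if_false,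
        not_true, not_false_iff] at hi ⊢ <;>
      first | trivial | tauto | exact absurd hi (by decide)
  constructor
  · rw [eq_empty_iff_forall_notMem]; intro i hi; rw [mem_inter] at hi; exact (hp i).1 hi
  · ext i; rw [mem_union]; exact (hp i).2

lemma c_bb_s (h : bv J + bv K = sv L) : J ∪ K = univ ∧ L = J ∩ K := by
  have hp : ∀ i : Fin r, (i ∈ J ∨ i ∈ K) ∧ (i ∈ L ↔ (i ∈ J ∧ i ∈ K)) := by
    intro i
    have hi := congrFun h i
    by_cases h1 : i ∈ J <;> by_cases h2 : i ∈ K <;> by_cases h3 : i ∈ L <;>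
      simp only [sv, bv, Pi.add_apply, h1, h2, h3, if_true, if_false,
        not_true, not_false_iff] at hi ⊢ <;>
      first | trivial | tauto | exact absurd hi (by decide)
  constructor
  · apply eq_univ_of_forall; intro i; rw [mem_union]; exact (hp i).1
  · ext i; rw [mem_inter]; exact (hp i).2

lemma c_bb_b (h : bv J + bv K = bv L) : J = K := by
  ext i
  have hi := congrFun h i
  by_cases h1 : i ∈ J <;> by_cases h2 : i ∈ K <;> by_cases h3 : i ∈ L <;>
    simp only [bv, Pi.add_apply, h1, h2, h3, if_true, if_false] at hi ⊢ <;>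
    first | trivial | exact absurd hi (by decide)

lemma c_ss_0 (h : sv J + sv K = 0) : J = ∅ := by
  rw [eq_empty_iff_forall_notMem]
  intro i h1
  have hi := congrFun h i
  by_cases h2 : i ∈ K <;>
    simp only [sv, Pi.add_apply, Pi.zero_apply, h1, h2, if_true, if_false] at hi <;>
    exact absurd hi (by decide)

lemma c_sb_0 (h : sv J + bv K = 0) : J = univ := by
  apply eq_univ_of_forall
  intro i
  have hi := congrFun h i
  by_cases h1 : i ∈ J <;> by_cases h2 : i ∈ K <;>
    simp only [sv, bv, Pi.add_apply, Pi.zero_apply, h1, h2, if_true, if_false] at hi <;>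
    first | trivial | exact absurd hi (by decide)

lemma c_bb_0 (h : bv J + bv K = 0) : K = Jᶜ := by
  ext i
  rw [mem_compl]
  have hi := congrFun h i
  by_cases h1 : i ∈ J <;> by_cases h2 : i ∈ K <;>
    simp only [bv, Pi.add_apply, Pi.zero_apply, h1, h2, if_true, if_false,
      not_true, not_false_iff] at hi ⊢ <;>
    first | trivial | exact absurd hi (by decide)

lemma c_s_0 (h : sv J = 0) : J = ∅ := by
  rw [eq_empty_iff_forall_notMem]
  intro i h1
  have hi := congrFun h i
  simp only [sv, Pi.zero_apply, h1, if_true] at hi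
  exact absurd hi (by decide)

lemma c_b_0 (h0 : 0 < r) (h : bv J = 0) : False := by
  have hi := congrFun h (⟨0, h0⟩ : Fin r)
  by_cases h1 : (⟨0, h0⟩ : Fin r) ∈ J <;>
    simp only [bv, Pi.zero_apply, h1, if_true, if_false] at hi <;>
    exact absurd hi (by decide)

end cores

lemma card_le_r (J : Finset (Fin r)) : J.card ≤ r := by
  simpa using Finset.card_le_univ J

def fam1 (r m : ℕ) : Finset (Finset (Fin r)) :=
  univ.filter fun J => Odd J.card ∧ J.card ≤ m

def fam2 (r d : ℕ) (h0 : 0 < r) : Finset (Finset (Fin r)) :=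
  if r % 4 = 2 then univ.filter fun J => J.card = d
  else univ.filter fun J => J.card = d ∧ (⟨0, h0⟩ : Fin r) ∈ J

def S0 (r m d : ℕ) (h0 : 0 < r) : Finset (Fin r → ZMod 3) :=
  (fam1 r m).image sv ∪ (fam2 r d h0).image bv

/-- property of being a member of `S0`, in unpacked form. -/
def Mem1 (r m d : ℕ) (h0 : 0 < r) (x : Fin r → ZMod 3) : Prop :=
  (∃ J : Finset (Fin r), (Odd J.card ∧ J.card ≤ m) ∧ x = sv J) ∨
  (∃ K : Finset (Fin r), (K.card = d ∧ (r % 4 ≠ 2 → (⟨0, h0⟩ : Fin r) ∈ K)) ∧ x = bv K)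

lemma mem_S0 {m d : ℕ} {h0 : 0 < r} {x : Fin r → ZMod 3} (hx : x ∈ S0 r m d h0) :
    Mem1 r m d h0 x := by
  rw [S0, mem_union] at hx
  rcases hx with hx | hx
  · left
    rw [mem_image] at hx
    obtain ⟨J, hJ, hxJ⟩ := hx
    rw [fam1, mem_filter] at hJ
    exact ⟨J, hJ.2, hxJ.symm⟩
  · right
    rw [mem_image] at hx
    obtain ⟨K, hK, hxK⟩ := hx
    rw [fam2] at hK
    by_cases hc : r % 4 = 2
    · rw [if_pos hc, mem_filter] at hK
      exact ⟨K, ⟨hK.2, fun h => absurd hc h⟩, hxK.symm⟩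
    · rw [if_neg hc, mem_filter] at hK
      exact ⟨K, ⟨hK.2.1, fun _ => hK.2.2⟩, hxK.symm⟩

lemma card_fam1 (m : ℕ) :
    (fam1 r m).card = ∑ j ∈ (Finset.Icc 1 m).filter (fun j => Odd j), Nat.choose r j := by
  have he : fam1 r m
      = ((Finset.Icc 1 m).filter (fun j => Odd j)).biUnion
          (fun j => Finset.powersetCard j univ) := by
    ext J
    simp only [fam1, mem_filter, mem_univ, true_and, mem_biUnion, mem_Icc,
      Finset.mem_powersetCard]
    constructor
    · rintro ⟨ho, hle⟩
      exact ⟨J.card, ⟨⟨ho.pos, hle⟩, ho⟩, subset_univ J, rfl⟩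
    · rintro ⟨j, ⟨⟨_, hj⟩, ho⟩, _, hcard⟩
      rw [hcard]; exact ⟨ho, hj⟩
  rw [he, card_biUnion]
  · apply Finset.sum_congr rfl
    intro j _
    rw [Finset.card_powersetCard, card_univ, Fintype.card_fin]
  · intro a _ b _ hab
    rw [Function.onFun, Finset.disjoint_left]
    intro J hJa hJb
    rw [Finset.mem_powersetCard] at hJa hJb
    exact hab (hJa.2.symm.trans hJb.2)

lemma card_fam2_two {d : ℕ} (h0 : 0 < r) (hc : r % 4 = 2) :
    (fam2 r d h0).card = Nat.choose r d := by
  have he : fam2 r d h0 = Finset.powersetCard d univ := by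
    rw [fam2, if_pos hc]
    ext J
    simp [Finset.mem_powersetCard, subset_univ]
  rw [he, Finset.card_powersetCard, card_univ, Fintype.card_fin]

lemma card_fam2_zero {d : ℕ} (h0 : 0 < r) (hc : ¬ r % 4 = 2) (hdd : 2 * d = r) :
    2 * (fam2 r d h0).card = Nat.choose r d := by
  classical
  have he : fam2 r d h0
      = (Finset.powersetCard d (univ : Finset (Fin r))).filter
          (fun J => (⟨0, h0⟩ : Fin r) ∈ J) := by
    rw [fam2, if_neg hc]
    ext J
    simp [Finset.mem_powersetCard, subset_univ]
  have hcc : ∀ J : Finset (Fin r), J.card = d → Jᶜ.card = d := by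
    intro J hJ
    rw [Finset.card_compl, Fintype.card_fin, hJ]
    omega
  have hbij : ((Finset.powersetCard d (univ : Finset (Fin r))).filter
          (fun J => (⟨0, h0⟩ : Fin r) ∈ J)).card
      = ((Finset.powersetCard d (univ : Finset (Fin r))).filter
          (fun J => ¬ (⟨0, h0⟩ : Fin r) ∈ J)).card := by
    apply Finset.card_bij (fun J _ => Jᶜ)
    · intro J hJ
      rw [mem_filter, Finset.mem_powersetCard] at hJ ⊢
      exact ⟨⟨subset_univ _, hcc J hJ.1.2⟩, by simp [hJ.2]⟩
    · intro J₁ _ J₂ _ h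
      exact compl_injective h
    · intro K hK
      rw [mem_filter, Finset.mem_powersetCard] at hK
      refine ⟨Kᶜ, ?_, compl_compl K⟩
      rw [mem_filter, Finset.mem_powersetCard]
      exact ⟨⟨subset_univ _, hcc K hK.1.2⟩, by simp [hK.2]⟩
  have hsum := Finset.card_filter_add_card_filter_not
    (s := Finset.powersetCard d (univ : Finset (Fin r)))
    (p := fun J => (⟨0, h0⟩ : Fin r) ∈ J)
  rw [Finset.card_powersetCard, card_univ, Fintype.card_fin] at hsum
  rw [he]
  omega

lemma card_S0 {m d : ℕ} (h0 : 0 < r) (hd1 : 1 ≤ d) :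
    (S0 r m d h0).card = (fam1 r m).card + (fam2 r d h0).card := by
  rw [S0, Finset.card_union_of_disjoint, card_image_of_injective _ sv_inj,
    card_image_of_injective _ bv_inj]
  rw [Finset.disjoint_left]
  rintro x hx1 hx2
  rw [mem_image] at hx1 hx2
  obtain ⟨J, _, rfl⟩ := hx1
  obtain ⟨K, hK, hKx⟩ := hx2
  have hKd : K.card = d := by
    rw [fam2] at hK
    by_cases hc : r % 4 = 2
    · rw [if_pos hc, mem_filter] at hK; exact hK.2
    · rw [if_neg hc, mem_filter] at hK; exact hK.2.1
  have hKne : K.Nonempty := Finset.card_pos.mp (by omega)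
  exact sv_ne_bv hKne hKx.symm

section elemlemmas

variable {m d : ℕ} {h0 : 0 < r}
variable (hr : 4 < r) (h2 : r % 2 = 0) (hm : 4 * m ≤ 3 * r - 4)
  (hd : (r % 4 = 2 ∧ 2 * d + 2 = r) ∨ (r % 4 ≠ 2 ∧ 2 * d = r))

include hr h2 hm hd

lemma L1 {x : Fin r → ZMod 3} (hx : Mem1 r m d h0 x) : x ≠ 0 := by
  rcases hx with ⟨J, ⟨hJo, _⟩, rfl⟩ | ⟨K, ⟨hKd, _⟩, rfl⟩
  · intro h
    have hJ := c_s_0 h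
    rw [hJ, Finset.card_empty] at hJo
    exact (Nat.not_odd_iff_even.mpr Even.zero) hJo
  · exact fun h => c_b_0 h0 h

lemma L2 {x y : Fin r → ZMod 3} (hx : Mem1 r m d h0 x) (hy : Mem1 r m d h0 y) :
    x + y ≠ 0 := by
  have hcase : ∀ J K : Finset (Fin r), (Odd J.card ∧ J.card ≤ m) →
      (K.card = d ∧ (r % 4 ≠ 2 → (⟨0, h0⟩ : Fin r) ∈ K)) → sv J + bv K ≠ 0 := by
    intro J K ⟨hJo, hJm⟩ _ h
    have hJ := c_sb_0 h
    have : J.card = r := by rw [hJ, card_univ, Fintype.card_fin]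
    omega
  rcases hx with ⟨J, hJ, rfl⟩ | ⟨J, hJ, rfl⟩ <;> rcases hy with ⟨K, hK, rfl⟩ | ⟨K, hK, rfl⟩
  · intro h
    have hJe := c_ss_0 h
    obtain ⟨hJo, _⟩ := hJ
    rw [hJe, Finset.card_empty] at hJo
    exact (Nat.not_odd_iff_even.mpr Even.zero) hJo
  · exact hcase J K hJ hK
  · intro h
    exact hcase K J hK hJ (by linear_combination h)
  · intro h
    have hKc := c_bb_0 h
    obtain ⟨hJd, hJ0⟩ := hJ
    obtain ⟨hKd, hK0⟩ := hK
    rcases hd with ⟨hc, hdd⟩ | ⟨hc, hdd⟩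
    · have h5 : K.card = r - J.card := by rw [hKc, card_compl, Fintype.card_fin]
      have := card_le_r J
      omega
    · have ha : (⟨0, h0⟩ : Fin r) ∈ J := hJ0 hc
      have hb : (⟨0, h0⟩ : Fin r) ∈ Jᶜ := hKc ▸ hK0 hc
      rw [Finset.mem_compl] at hb
      exact hb ha

lemma L3 {x y z : Fin r → ZMod 3} (hx : Mem1 r m d h0 x) (hy : Mem1 r m d h0 y)
    (hz : Mem1 r m d h0 z) (hxy : x ≠ y) : x + y + z ≠ 0 := by
  have hssb : ∀ J K L : Finset (Fin r), Odd J.card → J.card ≤ m → Odd K.card → K.card ≤ m →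
      L.card = d → sv J + sv K + bv L ≠ 0 := by
    intro J K L hJo hJm hKo hKm hLd h
    obtain ⟨hu, hcpl⟩ := c_ssb h
    have h1 := Finset.card_union_add_card_inter J K
    rw [hu, card_univ, Fintype.card_fin] at h1
    have h3 : (J ∩ K).card = r - L.card := by
      rw [← hcpl, card_compl, Fintype.card_fin]
    have h4 := card_le_r L
    obtain ⟨a, ha⟩ := hJo
    obtain ⟨b, hb⟩ := hKo
    omega
  have hsbb : ∀ J K L : Finset (Fin r), Odd J.card → K.card = d →
      L.card = d → sv J + bv K + bv L ≠ 0 := by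
    intro J K L hJo hKd hLd h
    have hc := c_sbb h
    have h1 : ((K ∪ L) \ (K ∩ L)).card = (K ∪ L).card - (K ∩ L).card :=
      Finset.card_sdiff_of_subset (Finset.inter_subset_union)
    have h2' := Finset.card_union_add_card_inter K L
    have h3 : ((K ∪ L) \ (K ∩ L)).card = r - J.card := by
      rw [hc, card_compl, Fintype.card_fin]
    have h4 := card_le_r J
    have h5 : (K ∩ L).card ≤ (K ∪ L).card :=
      Finset.card_le_card Finset.inter_subset_union
    obtain ⟨a, ha⟩ := hJo
    omega
  rcases hx with ⟨J, ⟨hJo, hJm⟩, rfl⟩ | ⟨J, ⟨hJd, hJ0⟩, rfl⟩ <;>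
    rcases hy with ⟨K, ⟨hKo, hKm⟩, rfl⟩ | ⟨K, ⟨hKd, hK0⟩, rfl⟩ <;>
    rcases hz with ⟨L, ⟨hLo, hLm⟩, rfl⟩ | ⟨L, ⟨hLd, hL0⟩, rfl⟩ <;> intro h
  · exact hxy (congrArg sv (c_sss h))
  · exact hssb J K L hJo hJm hKo hKm hLd h
  · exact hssb J L K hJo hJm hLo hLm hKd (by linear_combination h)
  · exact hsbb J K L hJo hKd hLd h
  · exact hssb K L J hKo hKm hLo hLm hJd (by linear_combination h)
  · exact hsbb K J L hKo hJd hLd (by linear_combination h)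
  · exact hsbb L J K hLo hJd hKd (by linear_combination h)
  · exact hxy (congrArg bv (c_bbb h))

lemma L4 {x y z : Fin r → ZMod 3} (hx : Mem1 r m d h0 x) (hy : Mem1 r m d h0 y)
    (hz : Mem1 r m d h0 z) (hxy : x ≠ y) : x + y ≠ z := by
  have hsbs : ∀ J K L : Finset (Fin r), Odd J.card → K.card = d →
      sv J + bv K ≠ sv L := by
    intro J K L hJo hKd h
    have hJK := c_sb_s h
    obtain ⟨a, ha⟩ := hJo
    rw [hJK, hKd] at ha
    omega
  have hsbb2 : ∀ J K L : Finset (Fin r), Odd J.card → K.card = d → L.card = d →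
      sv J + bv K ≠ bv L := by
    intro J K L hJo hKd hLd h
    obtain ⟨hdisj, hL⟩ := c_sb_b h
    have h1 := Finset.card_union_add_card_inter J K
    rw [hdisj, Finset.card_empty, ← hL] at h1
    obtain ⟨a, ha⟩ := hJo
    omega
  rcases hx with ⟨J, ⟨hJo, hJm⟩, rfl⟩ | ⟨J, ⟨hJd, hJ0⟩, rfl⟩ <;>
    rcases hy with ⟨K, ⟨hKo, hKm⟩, rfl⟩ | ⟨K, ⟨hKd, hK0⟩, rfl⟩ <;>
    rcases hz with ⟨L, ⟨hLo, hLm⟩, rfl⟩ | ⟨L, ⟨hLd, hL0⟩, rfl⟩ <;> intro h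
  · obtain ⟨hdisj, hL⟩ := c_ss_s h
    have h1 := Finset.card_union_add_card_inter J K
    rw [hdisj, Finset.card_empty, ← hL] at h1
    obtain ⟨a, ha⟩ := hJo
    obtain ⟨b, hb⟩ := hKo
    obtain ⟨c, hc⟩ := hLo
    omega
  · obtain ⟨hu, hL⟩ := c_ss_b h
    have h1 := Finset.card_union_add_card_inter J K
    rw [hu, card_univ, Fintype.card_fin, ← hL] at h1
    omega
  · exact hsbs J K L hJo hKd h
  · exact hsbb2 J K L hJo hKd hLd h
  · exact hsbs K J L hKo hJd (by linear_combination h)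
  · exact hsbb2 K J L hKo hJd hLd (by linear_combination h)
  · obtain ⟨hu, hL⟩ := c_bb_s h
    have h1 := Finset.card_union_add_card_inter J K
    rw [hu, card_univ, Fintype.card_fin, ← hL] at h1
    obtain ⟨c, hc⟩ := hLo
    omega
  · exact hxy (congrArg bv (c_bb_b h))

lemma no_short : ∀ t₁ t₂ : Multiset (Fin r → ZMod 3),
    t₁ + t₂ ≤ (S0 r m d h0).val → 1 ≤ Multiset.card (t₁ + t₂) →
    Multiset.card (t₁ + t₂) ≤ 3 → t₁.sum ≠ t₂.sum := by
  intro t₁ t₂ hle hc1 hc3 hsum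
  have hmem : ∀ a ∈ t₁ + t₂, Mem1 r m d h0 a := fun a ha =>
    mem_S0 (Multiset.mem_of_le hle ha)
  have hnd : (t₁ + t₂).Nodup := Multiset.nodup_of_le hle (S0 r m d h0).nodup
  rw [Multiset.card_add] at hc1 hc3
  have e1 : Multiset.card t₁ = 0 ∨ Multiset.card t₁ = 1 ∨ Multiset.card t₁ = 2 ∨
      Multiset.card t₁ = 3 := by omega
  have e2 : Multiset.card t₂ = 0 ∨ Multiset.card t₂ = 1 ∨ Multiset.card t₂ = 2 ∨
      Multiset.card t₂ = 3 := by omega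
  rcases e1 with hq1 | hq1 | hq1 | hq1 <;> rcases e2 with hq2 | hq2 | hq2 | hq2 <;>
      try omega
  -- (0,1)
  · obtain rfl := Multiset.card_eq_zero.mp hq1
    obtain ⟨a, rfl⟩ := Multiset.card_eq_one.mp hq2
    simp only [Multiset.sum_zero, Multiset.sum_singleton] at hsum
    exact L1 hr h2 hm hd (hmem a (by simp)) hsum.symm
  -- (0,2)
  · obtain rfl := Multiset.card_eq_zero.mp hq1
    obtain ⟨a, b, rfl⟩ := Multiset.card_eq_two.mp hq2
    have hma := hmem a (by simp)
    have hmb := hmem b (by simp)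
    refine L2 hr h2 hm hd hma hmb ?_
    simp only [Multiset.sum_zero] at hsum
    have : ({a, b} : Multiset _).sum = a + b := by
      simp [Multiset.insert_eq_cons]
    rw [this] at hsum
    linear_combination -hsum
  -- (0,3)
  · obtain rfl := Multiset.card_eq_zero.mp hq1
    obtain ⟨a, b, c, rfl⟩ := Multiset.card_eq_three.mp hq2
    have hma := hmem a (by simp)
    have hmb := hmem b (by simp)
    have hmc := hmem c (by simp)
    have hab : a ≠ b := by
      simp at hnd
      tauto
    refine L3 hr h2 hm hd hma hmb hmc hab ?_
    simp only [Multiset.sum_zero] at hsum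
    have : ({a, b, c} : Multiset _).sum = a + b + c := by
      simp [Multiset.insert_eq_cons]; ring
    rw [this] at hsum
    linear_combination -hsum
  -- (1,0)
  · obtain ⟨a, rfl⟩ := Multiset.card_eq_one.mp hq1
    obtain rfl := Multiset.card_eq_zero.mp hq2
    simp only [Multiset.sum_zero, Multiset.sum_singleton] at hsum
    exact L1 hr h2 hm hd (hmem a (by simp)) hsum
  -- (1,1)
  · obtain ⟨a, rfl⟩ := Multiset.card_eq_one.mp hq1
    obtain ⟨b, rfl⟩ := Multiset.card_eq_one.mp hq2
    simp only [Multiset.sum_singleton] at hsum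
    have hab : a ≠ b := by
      simp at hnd
      tauto
    exact hab hsum
  -- (1,2)
  · obtain ⟨c, rfl⟩ := Multiset.card_eq_one.mp hq1
    obtain ⟨a, b, rfl⟩ := Multiset.card_eq_two.mp hq2
    have hma := hmem a (by simp)
    have hmb := hmem b (by simp)
    have hmc := hmem c (by simp)
    have hab : a ≠ b := by
      simp at hnd
      tauto
    refine L4 hr h2 hm hd hma hmb hmc hab ?_
    simp only [Multiset.sum_singleton] at hsum
    have : ({a, b} : Multiset _).sum = a + b := by simp [Multiset.insert_eq_cons]
    rw [this] at hsum
    exact hsum.symm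
  -- (2,0)
  · obtain ⟨a, b, rfl⟩ := Multiset.card_eq_two.mp hq1
    obtain rfl := Multiset.card_eq_zero.mp hq2
    have hma := hmem a (by simp)
    have hmb := hmem b (by simp)
    refine L2 hr h2 hm hd hma hmb ?_
    simp only [Multiset.sum_zero] at hsum
    have : ({a, b} : Multiset _).sum = a + b := by simp [Multiset.insert_eq_cons]
    rw [this] at hsum
    exact hsum
  -- (2,1)
  · obtain ⟨a, b, rfl⟩ := Multiset.card_eq_two.mp hq1
    obtain ⟨c, rfl⟩ := Multiset.card_eq_one.mp hq2
    have hma := hmem a (by simp)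
    have hmb := hmem b (by simp)
    have hmc := hmem c (by simp)
    have hab : a ≠ b := by
      simp at hnd
      tauto
    refine L4 hr h2 hm hd hma hmb hmc hab ?_
    simp only [Multiset.sum_singleton] at hsum
    have : ({a, b} : Multiset _).sum = a + b := by simp [Multiset.insert_eq_cons]
    rw [this] at hsum
    exact hsum
  -- (3,0)
  · obtain ⟨a, b, c, rfl⟩ := Multiset.card_eq_three.mp hq1
    obtain rfl := Multiset.card_eq_zero.mp hq2
    have hma := hmem a (by simp)
    have hmb := hmem b (by simp)
    have hmc := hmem c (by simp)
    have hab : a ≠ b := by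
      simp at hnd
      tauto
    refine L3 hr h2 hm hd hma hmb hmc hab ?_
    simp only [Multiset.sum_zero] at hsum
    have : ({a, b, c} : Multiset _).sum = a + b + c := by
      simp [Multiset.insert_eq_cons]; ring
    rw [this] at hsum
    exact hsum

end elemlemmas

lemma exp3 (h0 : 0 < r) : AddMonoid.exponent (Fin r → ZMod 3) = 3 := by
  apply Nat.dvd_antisymm
  · rw [AddMonoid.exponent_dvd_iff_forall_nsmul_eq_zero]
    intro g
    ext i
    have : ((3 : ℕ) • g) i = (3 : ℕ) • g i := by simp
    rw [this]
    have h3 : ((3 : ℕ) : ZMod 3) = 0 := by decide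
    rw [nsmul_eq_mul, h3, zero_mul]
    rfl
  · have hsur : Function.Surjective
        (Pi.evalAddMonoidHom (fun _ : Fin r => ZMod 3) (⟨0, h0⟩ : Fin r)) :=
      Function.surjective_eval _
    have hdvd := AddMonoidHom.exponent_dvd hsur
    rwa [ZMod.exponent] at hdvd

lemma etaA_set_nonempty (h0 : 0 < r) :
    {ℓ : ℕ | ∀ S : Multiset (Fin r → ZMod 3), ℓ ≤ Multiset.card S →
      ∃ k, 1 ≤ k ∧ k ≤ AddMonoid.exponent (Fin r → ZMod 3) ∧ HasWZSS S k}.Nonempty := by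
  classical
  refine ⟨Fintype.card (Fin r → ZMod 3) + 1, ?_⟩
  intro S hS
  have hnd : ¬ S.Nodup := by
    intro hnd
    have : Multiset.card S ≤ Fintype.card (Fin r → ZMod 3) := by
      have h1 : Multiset.card S = (⟨S, hnd⟩ : Finset (Fin r → ZMod 3)).card := rfl
      rw [h1, ← Finset.card_univ]
      exact Finset.card_le_univ _
    omega
  rw [Multiset.nodup_iff_count_le_one] at hnd
  push_neg at hnd
  obtain ⟨a, ha⟩ := hnd
  have hexp : 2 ≤ AddMonoid.exponent (Fin r → ZMod 3) := by
    rw [exp3 h0]; omega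
  refine ⟨2, by omega, hexp, {a}, {a}, ?_, by simp, rfl⟩
  have hrep : Multiset.replicate 2 a ≤ S := Multiset.le_count_iff_replicate_le.mp (by omega)
  have he : ({a} + {a} : Multiset (Fin r → ZMod 3)) = Multiset.replicate 2 a := rfl
  rw [he]
  exact hrep

lemma main (r d : ℕ) (h0 : 0 < r) (hr : 4 < r) (h2 : r % 2 = 0)
    (hd : (r % 4 = 2 ∧ 2 * d + 2 = r) ∨ (r % 4 ≠ 2 ∧ 2 * d = r)) :
    (S0 r ((3 * r - 4) / 4) d h0).card + 1 ≤ etaA (Fin r → ZMod 3) := by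
  rw [etaA]
  apply le_csInf (etaA_set_nonempty h0)
  intro b hb
  by_contra hlt
  push_neg at hlt
  have hble : b ≤ (S0 r ((3 * r - 4) / 4) d h0).card := by omega
  obtain ⟨k, hk1, hkexp, t₁, t₂, hle, hcard, hsum⟩ :=
    hb (S0 r ((3 * r - 4) / 4) d h0).val hble
  rw [exp3 h0] at hkexp
  have hm : 4 * ((3 * r - 4) / 4) ≤ 3 * r - 4 := by omega
  exact no_short hr h2 hm hd t₁ t₂ hle (by omega) (by omega) hsum

end EtaAux

open EtaAux in
/-- Proposition 5: for even `r > 4`, with `m = ⌊(3r-4)/4⌋` and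
`ℓ(r) = C(r, (r-2)/2)` if `r ≡ 2 (mod 4)`, `ℓ(r) = C(r, r/2)/2` if `r ≡ 0 (mod 4)`,
`η_A(C_3^r) ≥ Σ_{1 ≤ j ≤ m, j odd} C(r,j) + ℓ(r) + 1`. -/
theorem etaA_lower_even (r : ℕ) (hr : 4 < r) (heven : Even r) :
    (∑ j ∈ (Finset.Icc 1 ((3 * r - 4) / 4)).filter (fun j => Odd j), Nat.choose r j)
      + (if r % 4 = 2 then Nat.choose r ((r - 2) / 2) else Nat.choose r (r / 2) / 2)
      + 1 ≤ etaA (Fin r → ZMod 3) := by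
  have h0 : 0 < r := by omega
  have h2 : r % 2 = 0 := Nat.even_iff.mp heven
  by_cases hc : r % 4 = 2
  · rw [if_pos hc]
    have hmain := main r ((r - 2) / 2) h0 hr h2 (Or.inl ⟨hc, by omega⟩)
    rwa [card_S0 h0 (by omega), card_fam1, card_fam2_two h0 hc] at hmain
  · rw [if_neg hc]
    have hdd : 2 * (r / 2) = r := by omega
    have hmain := main r (r / 2) h0 hr h2 (Or.inr ⟨hc, hdd⟩)
    rw [card_S0 h0 (by omega), card_fam1] at hmain
    have h22 := card_fam2_zero h0 hc hdd
    rw [show Nat.choose r (r / 2) / 2 = (fam2 r (r / 2) h0).card from by omega]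
    exact hmain
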